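/- arXiv:1805.10708 — 2 statements merged into one kernel-verified Lean document; each statement's English description precedes it below -/
import Mathlib

section
/- For every j ∈ {1, …, r}, in the digraph with arc set D_j every bridge has out-degree at most 1, and D_j contains no directed cycle. Consequently, the undirected graph underlying D_j is a forest, and each of its connected components is a tree all of whose arcs are oriented toward a unique root (the unique vertex of the component with out-degree 0 in D_j). -/
namespace PaperTW

variable {V : Type*} [DecidableEq V]

/-- `v` is an internal vertex of the `s`–`t` walk `W`. -/
def Internal {G : SimpleGraph V} {s t : V} (W : G.Walk s t) (v : V) : Prop :=
  v ∈ W.support ∧ v ≠ s ∧ v ≠ t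

/-- The walk `W` (oriented from `s` to `t`) traverses an edge from `u` to `v`. -/
def Traversed {G : SimpleGraph V} {s t : V} (W : G.Walk s t) (u v : V) : Prop :=
  ∃ d ∈ W.darts, d.toProd = (u, v)

/-- A system of `s`–`t` paths that are pairwise vertex-disjoint except at the
shared endpoints `s` and `t`. -/
def PathSystem {G : SimpleGraph V} {s t : V} {r : ℕ} (P : Fin r → G.Walk s t) : Prop :=
  (∀ j, (P j).IsPath) ∧
    ∀ j j', j ≠ j' → ∀ v, v ∈ (P j).support → v ∈ (P j').support → v = s ∨ v = t

/-- The vertex `v_in` of the split residual digraph. -/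
def vin (v : V) : V ⊕ V := Sum.inl v

/-- The vertex `v_out` of the split residual digraph (with the conventions
`s_in = s_out = s` and `t_in = t_out = t`). -/
def vout (s t v : V) : V ⊕ V := if v = s ∨ v = t then Sum.inl v else Sum.inr v

variable (G : SimpleGraph V) (s t : V) {r : ℕ} (P : Fin r → G.Walk s t)

/-- Arcs of the split residual digraph `G'_res`. -/
inductive SplitArc : V ⊕ V → V ⊕ V → Prop
  | split (v : V) (h1 : v ≠ s) (h2 : v ≠ t) (h3 : ∀ j, ¬ Internal (P j) v) :
      SplitArc (vin v) (vout s t v)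
  | back (v : V) (j : Fin r) (h : Internal (P j) v) :
      SplitArc (vout s t v) (vin v)
  | offpath (u v : V) (h : G.Adj u v) (h2 : ∀ j, s(u, v) ∉ (P j).edges) :
      SplitArc (vout s t u) (vin v)
  | pathRev (u v : V) (j : Fin r) (h : Traversed (P j) u v) :
      SplitArc (vout s t v) (vin u)
  | pathRev' (u v : V) (j : Fin r) (h : Traversed (P j) u v) :
      SplitArc (vin v) (vout s t u)

open Classical in
/-- The identification map defining `G_res`: for every `v` internal to none of the
paths, `v_in` and `v_out` are identified into the single vertex `v`. -/
noncomputable def collapse : V ⊕ V → V ⊕ V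
  | Sum.inl v => Sum.inl v
  | Sum.inr v => if ∃ j, Internal (P j) v then Sum.inr v else Sum.inl v

/-- Arcs of the residual digraph `G_res`. -/
def ResArc (x y : V ⊕ V) : Prop :=
  ∃ a b, SplitArc G s t P a b ∧ x = collapse G s t P a ∧ y = collapse G s t P b

/-- The arcs `(v_out, u_in)` of `G_res` coming from edges of some path traversed
from `u` to `v` (these get deleted to form the reachability digraph). -/
def DeletedArc (x y : V ⊕ V) : Prop :=
  ∃ u v, (∃ j, Traversed (P j) u v) ∧
    x = collapse G s t P (vout s t v) ∧ y = collapse G s t P (vin u)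

/-- Arcs of `G_res` with the arcs `(v_out, u_in)` (for path edges traversed from
`u` to `v`) deleted. -/
def ReachArc (x y : V ⊕ V) : Prop :=
  ResArc G s t P x y ∧ ¬ DeletedArc G s t P x y

/-- Vertices lying on none of the paths (and different from `s`, `t`). -/
def offPath : Set V := {v | v ≠ s ∧ v ≠ t ∧ ∀ j, v ∉ (P j).support}

/-- Bridges: connected components of the subgraph of `G` induced on the vertices
off all the paths. -/
abbrev Bridge := (G.induce (offPath G s t P)).ConnectedComponent

/-- Vertices of the reachability digraph `G_R`: path vertices of `G_res`, plus one
contracted vertex `β_i` for each bridge `B_i`. -/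
abbrev GRV := (V ⊕ V) ⊕ Bridge G s t P

open Classical in
/-- The contraction map from vertices of `G_res` to vertices of `G_R`. -/
noncomputable def toGR : V ⊕ V → GRV G s t P
  | Sum.inl v =>
      if h : v ∈ offPath G s t P then
        Sum.inr ((G.induce (offPath G s t P)).connectedComponentMk ⟨v, h⟩)
      else Sum.inl (Sum.inl v)
  | Sum.inr v =>
      if h : v ∈ offPath G s t P then
        Sum.inr ((G.induce (offPath G s t P)).connectedComponentMk ⟨v, h⟩)
      else Sum.inl (Sum.inr v)

/-- Arcs of the reachability digraph `G_R` (arcs inside a bridge disappear). -/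
def GRArc (X Y : GRV G s t P) : Prop :=
  (∃ a b, ReachArc G s t P a b ∧ X = toGR G s t P a ∧ Y = toGR G s t P b) ∧ X ≠ Y

/-- The vertices of the directed path `P_j` inside `G_res`/`G_R`. -/
def OnPath (j : Fin r) (x : V ⊕ V) : Prop :=
  x = Sum.inl s ∨ x = Sum.inl t ∨ ∃ v, Internal (P j) v ∧ (x = Sum.inl v ∨ x = Sum.inr v)

/-- Numbering of the vertices of the directed path `P_j` of `G_R` (going from `t`
to `s`) starting from its final vertex `s`: `s` gets number 1, and the `i`-th
internal vertex `v` (counted from the `s`-side, whence `v` has index `i` in the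
support of `P_j`) contributes `v_in ↦ 2i` and `v_out ↦ 2i + 1`; finally `t` gets
the largest number. -/
def posOn (j : Fin r) : V ⊕ V → ℕ
  | Sum.inl v =>
      if v = s then 1
      else if v = t then 2 * (P j).support.length - 2
      else 2 * (P j).support.idxOf v
  | Sum.inr v => 2 * (P j).support.idxOf v + 1

/-- Positions on `P_j` of the in-neighbors of the bridge `β` in `G_R`. -/
def InPos (β : Bridge G s t P) (j : Fin r) : Set ℕ :=
  {n | ∃ x, OnPath G s t P j x ∧ GRArc G s t P (Sum.inl x) (Sum.inr β) ∧ posOn G s t P j x = n}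

/-- Positions on `P_j` of the out-neighbors of the bridge `β` in `G_R`. -/
def OutPos (β : Bridge G s t P) (j : Fin r) : Set ℕ :=
  {n | ∃ x, OnPath G s t P j x ∧ GRArc G s t P (Sum.inr β) (Sum.inl x) ∧ posOn G s t P j x = n}

/-- `l_β^j` is defined. -/
def HasL (β : Bridge G s t P) (j : Fin r) : Prop := (InPos G s t P β j).Nonempty

/-- `r_β^j` is defined. -/
def HasR (β : Bridge G s t P) (j : Fin r) : Prop := (OutPos G s t P β j).Nonempty

/-- The position of `l_β^j`, the leftmost in-neighbor of `β` on `P_j`. -/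
noncomputable def lpos (β : Bridge G s t P) (j : Fin r) : ℕ := sInf (InPos G s t P β j)

/-- The position of `r_β^j`, the rightmost out-neighbor of `β` on `P_j`. -/
noncomputable def rpos (β : Bridge G s t P) (j : Fin r) : ℕ := sSup (OutPos G s t P β j)

/-- Condition (a) of the definition of `D_j`. -/
def CondA (βi βx : Bridge G s t P) : Prop :=
  ∃ y : Fin r, HasL G s t P βx y ∧ HasR G s t P βi y ∧ lpos G s t P βx y ≤ rpos G s t P βi y

/-- Condition (b) of the definition of `D_j`. -/
def CondB (j : Fin r) (βi βx : Bridge G s t P) : Prop :=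
  HasR G s t P βx j ∧ (¬ HasR G s t P βi j ∨ rpos G s t P βi j < rpos G s t P βx j)

variable (ID : Bridge G s t P → ℕ)

/-- The arc set `D_j` of the bridge graph. -/
def DArc (j : Fin r) (βi βx : Bridge G s t P) : Prop :=
  βi ≠ βx ∧ CondA G s t P βi βx ∧ CondB G s t P j βi βx ∧
    ∀ βz : Bridge G s t P, βz ≠ βi → CondA G s t P βi βz → CondB G s t P j βi βz →
      (rpos G s t P βz j < rpos G s t P βx j ∨
        (rpos G s t P βz j = rpos G s t P βx j ∧ ID βz ≤ ID βx))

/-- Lying in the same connected component of the undirected graph underlying `D_j`. -/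
def SameCompD (j : Fin r) : Bridge G s t P → Bridge G s t P → Prop :=
  Relation.ReflTransGen (fun a b => DArc G s t P ID j a b ∨ DArc G s t P ID j b a)

/-- `v` is a vertex of the bridge `β`. -/
def InBridge (β : Bridge G s t P) (v : V) : Prop :=
  ∃ h : v ∈ offPath G s t P, (G.induce (offPath G s t P)).connectedComponentMk ⟨v, h⟩ = β

/-- The bridge `β` is `s`-reachable: some vertex of it is adjacent to `s` in `G`. -/
def SReachable (β : Bridge G s t P) : Prop := ∃ v, InBridge G s t P β v ∧ G.Adj s v

/-- The bridge `β` is `t`-reachable: some vertex of it is adjacent to `t` in `G`. -/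
def TReachable (β : Bridge G s t P) : Prop := ∃ v, InBridge G s t P β v ∧ G.Adj v t

/-- The bridge `β` is mutually reachable with `s` in the reachability digraph `G_R`. -/
def BridgeWithS (β : Bridge G s t P) : Prop :=
  Relation.ReflTransGen (GRArc G s t P) (Sum.inl (Sum.inl s)) (Sum.inr β) ∧
  Relation.ReflTransGen (GRArc G s t P) (Sum.inr β) (Sum.inl (Sum.inl s))



section AbstractAux
open Relation SimpleGraph


variable {α : Type*} {D : α → α → Prop}

lemma rtg_confluent (hdet : ∀ ⦃a b c⦄, D a b → D a c → b = c) :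
    ∀ {a b c}, ReflTransGen D a b → ReflTransGen D a c →
      ReflTransGen D b c ∨ ReflTransGen D c b := by
  intro a b c hab
  induction hab using ReflTransGen.head_induction_on with
  | refl => exact fun h => Or.inl h
  | head hstep htail ih =>
    intro hac
    rcases hac.cases_head with rfl | ⟨c', hc', hcc⟩
    · exact Or.inr (ReflTransGen.head hstep htail)
    · cases hdet hstep hc'; exact ih hcc

lemma root_eq (hdet : ∀ ⦃a b c⦄, D a b → D a c → b = c) {a ρ1 ρ2 : α}
    (h1 : ReflTransGen D a ρ1) (r1 : ∀ γ, ¬ D ρ1 γ)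
    (h2 : ReflTransGen D a ρ2) (r2 : ∀ γ, ¬ D ρ2 γ) : ρ1 = ρ2 := by
  rcases rtg_confluent hdet h1 h2 with h | h
  · rcases h.cases_head with rfl | ⟨c, hc, -⟩
    · rfl
    · exact absurd hc (r1 c)
  · rcases h.cases_head with rfl | ⟨c, hc, -⟩
    · rfl
    · exact absurd hc (r2 c)

lemma exists_root (f : α → ℕ) (M : ℕ) (hb : ∀ a, f a ≤ M)
    (hlt : ∀ ⦃a b⦄, D a b → f a < f b) (a : α) :
    ∃ ρ, ReflTransGen D a ρ ∧ ∀ γ, ¬ D ρ γ := by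
  have key : ∀ n a, M + 1 - f a ≤ n → ∃ ρ, ReflTransGen D a ρ ∧ ∀ γ, ¬ D ρ γ := by
    intro n
    induction n with
    | zero => intro a ha; have := hb a; omega
    | succ n ih =>
      intro a ha
      by_cases h : ∃ γ, D a γ
      · obtain ⟨γ, hγ⟩ := h
        have h1 := hlt hγ
        have h2 := hb γ
        obtain ⟨ρ, hρ1, hρ2⟩ := ih γ (by omega)
        exact ⟨ρ, ReflTransGen.head hγ hρ1, hρ2⟩
      · exact ⟨a, ReflTransGen.refl, fun γ hγ => h ⟨γ, hγ⟩⟩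
  exact key (M + 1) a (by omega)

lemma comp_to_root (hdet : ∀ ⦃a b c⦄, D a b → D a c → b = c) {β ρ : α}
    (h : ReflTransGen (fun a b => D a b ∨ D b a) β ρ) (hρ : ∀ γ, ¬ D ρ γ) :
    ReflTransGen D β ρ := by
  induction h using ReflTransGen.head_induction_on with
  | refl => exact ReflTransGen.refl
  | head hstep htail ih =>
    rcases hstep with h1 | h1
    · exact ReflTransGen.head h1 ih
    · rcases rtg_confluent hdet (ReflTransGen.single h1) ih with h2 | h2
      · exact h2
      · rcases h2.cases_head with rfl | ⟨x, hx, -⟩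
        · exact ReflTransGen.refl
        · exact absurd hx (hρ x)

lemma transgen_lt (f : α → ℕ) (hlt : ∀ ⦃a b⦄, D a b → f a < f b) {a b : α}
    (h : TransGen D a b) : f a < f b := by
  induction h with
  | single h => exact hlt h
  | tail _ h ih => exact ih.trans (hlt h)

lemma head_ne_getLast_of_nodup {β : Type*} {L : List β} (hnd : L.Nodup)
    (hlen : 2 ≤ L.length) {e : β} (h1 : L.head? = some e)
    (h2 : L.reverse.head? = some e) : False := by
  cases L with
  | nil => simp at h1
  | cons a M =>
    rw [List.head?_cons, Option.some_inj] at h1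
    subst h1
    rcases hM : M.reverse with - | ⟨b, K⟩
    · have : M = [] := by simpa using congrArg List.reverse hM
      subst this; simp at hlen
    · have hMrev : (a :: M).reverse = b :: (K ++ [a]) := by
        rw [List.reverse_cons, hM]; rfl
      rw [hMrev, List.head?_cons, Option.some_inj] at h2
      have hMe : M = K.reverse ++ [b] := by
        have := congrArg List.reverse hM
        simpa using this
      have : a ∈ M := by rw [hMe, h2]; simp
      exact (List.nodup_cons.mp hnd).1 this

lemma walk_first {H : SimpleGraph α} {u : α} (c : H.Walk u u) (h3 : 3 ≤ c.length) :
    ∃ y, H.Adj u y ∧ y ∈ c.support ∧ c.edges.head? = some s(u, y) := by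
  cases c with
  | nil => simp at h3
  | cons h q => exact ⟨_, h, List.mem_cons_of_mem _ q.start_mem_support, by simp⟩

lemma no_cycle_min {H : SimpleGraph α} (hH : ∀ a b, H.Adj a b → (D a b ∨ D b a))
    (hdet : ∀ ⦃a b c⦄, D a b → D a c → b = c) (f : α → ℕ)
    (hlt : ∀ ⦃a b⦄, D a b → f a < f b) {u0 : α} (c' : H.Walk u0 u0)
    (hc' : c'.IsCycle) (hmin : ∀ w ∈ c'.support, f u0 ≤ f w) : False := by
  have h3 := hc'.three_le_length
  obtain ⟨x, hax, hxs, hx⟩ := walk_first c' h3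
  obtain ⟨y, hay, hys', hy⟩ := walk_first c'.reverse (by simpa using h3)
  have hys : y ∈ c'.support := by
    rw [SimpleGraph.Walk.support_reverse] at hys'
    exact List.mem_reverse.mp hys'
  have hnd : c'.edges.Nodup := hc'.isCircuit.isTrail.edges_nodup
  have hxy : x ≠ y := by
    rintro rfl
    rw [SimpleGraph.Walk.edges_reverse] at hy
    exact head_ne_getLast_of_nodup hnd
      (by rw [SimpleGraph.Walk.length_edges]; omega) hx hy
  have hdx : D u0 x := by
    rcases hH _ _ hax with h | h
    · exact h
    · exact absurd (hlt h) (not_lt.mpr (hmin x hxs))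
  have hdy : D u0 y := by
    rcases hH _ _ hay with h | h
    · exact h
    · exact absurd (hlt h) (not_lt.mpr (hmin y hys))
  exact hxy (hdet hdx hdy)

lemma acyclic_of_det {H : SimpleGraph α} (hH : ∀ a b, H.Adj a b → (D a b ∨ D b a))
    (hdet : ∀ ⦃a b c⦄, D a b → D a c → b = c) (f : α → ℕ)
    (hlt : ∀ ⦃a b⦄, D a b → f a < f b) : H.IsAcyclic := by
  classical
  intro u c hc
  have hne : ({n | ∃ w ∈ c.support, f w = n} : Set ℕ).Nonempty :=
    ⟨f u, u, c.start_mem_support, rfl⟩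
  obtain ⟨u0, hu0s, hu0⟩ := Nat.sInf_mem hne
  have hmin : ∀ w ∈ c.support, f u0 ≤ f w := fun w hw =>
    hu0 ▸ Nat.sInf_le ⟨w, hw, rfl⟩
  have hsub : ∀ w ∈ (c.rotate u0 hu0s).support, w ∈ c.support := by
    intro w hw
    rw [SimpleGraph.Walk.support_eq_cons] at hw
    rcases List.mem_cons.mp hw with rfl | hw
    · exact hu0s
    · exact List.mem_of_mem_tail
        (((SimpleGraph.Walk.support_rotate c u0 hu0s).mem_iff).mp hw)
  exact no_cycle_min hH hdet f hlt (c.rotate u0 hu0s) (hc.rotate hu0s)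
    (fun w hw => hmin w (hsub w hw))



end AbstractAux

section Specific

variable {V : Type*} [DecidableEq V] (G : SimpleGraph V) (s t : V) {r : ℕ}
  (P : Fin r → G.Walk s t)

lemma posOn_le (j : Fin r) (x : V ⊕ V) :
    posOn G s t P j x ≤ 2 * (P j).support.length + 1 := by
  have hle : ∀ v : V, (P j).support.idxOf v ≤ (P j).support.length :=
    fun v => List.idxOf_le_length
  cases x with
  | inl v =>
    simp only [posOn]
    split_ifs with h1 h2
    · omega
    · omega
    · have := hle v; omega
  | inr v =>
    simp only [posOn]
    have := hle v; omega

lemma posOn_pos (hst : s ≠ t) (j : Fin r) {x : V ⊕ V}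
    (hx : OnPath G s t P j x) : 1 ≤ posOn G s t P j x := by
  have hlen : 2 ≤ (P j).support.length := by
    rw [SimpleGraph.Walk.length_support]
    have : (P j).length ≠ 0 := fun h => hst (SimpleGraph.Walk.eq_of_length_eq_zero h)
    omega
  rcases hx with rfl | rfl | ⟨v, hv, rfl | rfl⟩
  · simp [posOn]
  · simp only [posOn, if_neg (Ne.symm hst), if_pos rfl, if_true]
    omega
  · simp only [posOn, if_neg hv.2.1, if_neg hv.2.2]
    have : (P j).support.idxOf v ≠ 0 := by
      rw [(P j).support_eq_cons, List.idxOf_cons_ne _ (Ne.symm hv.2.1)]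
      exact Nat.succ_ne_zero _
    omega
  · simp only [posOn]; omega

lemma outPos_bounds (hst : s ≠ t) (j : Fin r) (β : Bridge G s t P) {n : ℕ}
    (hn : n ∈ OutPos G s t P β j) :
    1 ≤ n ∧ n ≤ 2 * (P j).support.length + 1 := by
  obtain ⟨x, hx, -, rfl⟩ := hn
  exact ⟨posOn_pos G s t P hst j hx, posOn_le G s t P j x⟩

lemma rpos_le (hst : s ≠ t) (j : Fin r) (β : Bridge G s t P) :
    rpos G s t P β j ≤ 2 * (P j).support.length + 1 := by
  by_cases h : HasR G s t P β j
  · exact csSup_le h (fun n hn => (outPos_bounds G s t P hst j β hn).2)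
  · rw [rpos, Set.not_nonempty_iff_eq_empty.mp h, csSup_empty]
    exact Nat.zero_le _

lemma rpos_lt (hst : s ≠ t) (ID : Bridge G s t P → ℕ) (j : Fin r)
    {βi βx : Bridge G s t P} (h : DArc G s t P ID j βi βx) :
    rpos G s t P βi j < rpos G s t P βx j := by
  obtain ⟨-, -, ⟨hxR, hcase⟩, -⟩ := h
  have hb : BddAbove (OutPos G s t P βx j) :=
    ⟨2 * (P j).support.length + 1, fun m hm => (outPos_bounds G s t P hst j βx hm).2⟩
  have hx1 : 1 ≤ rpos G s t P βx j := by
    obtain ⟨n, hn⟩ := hxR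
    exact le_trans (outPos_bounds G s t P hst j βx hn).1 (le_csSup hb hn)
  rcases hcase with h | h
  · rw [rpos, Set.not_nonempty_iff_eq_empty.mp h, csSup_empty, Nat.bot_eq_zero]
    omega
  · exact h

lemma out_unique (ID : Bridge G s t P → ℕ) (hID : Function.Injective ID) (j : Fin r)
    {βi βx βx' : Bridge G s t P} (h : DArc G s t P ID j βi βx)
    (h' : DArc G s t P ID j βi βx') : βx = βx' := by
  have h1 := h.2.2.2 βx' (Ne.symm h'.1) h'.2.1 h'.2.2.1
  have h2 := h'.2.2.2 βx (Ne.symm h.1) h.2.1 h.2.2.1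
  rcases h1 with h1 | ⟨he1, hi1⟩ <;> rcases h2 with h2 | ⟨he2, hi2⟩
  · omega
  · omega
  · omega
  · exact hID (le_antisymm hi2 hi1)

end Specific

/-- The undirected simple graph underlying the arc set `D_j`. -/
def underlyingD {V : Type*} [DecidableEq V] (G : SimpleGraph V) (s t : V)
    {r : ℕ} (P : Fin r → G.Walk s t) (ID : Bridge G s t P → ℕ) (j : Fin r) :
    SimpleGraph (Bridge G s t P) where
  Adj a b := DArc G s t P ID j a b ∨ DArc G s t P ID j b a
  symm := ⟨fun _ _ h => Or.symm h⟩
  loopless := ⟨fun a h => by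
    cases h with
    | inl h => exact h.1 rfl
    | inr h => exact h.1 rfl⟩

/-- For every `j`, in the digraph with arc set `D_j` every bridge has out-degree
at most 1 and there is no directed cycle. Consequently, the undirected graph
underlying `D_j` is a forest, and each of its connected components is a tree all
of whose arcs are oriented toward a unique root, the unique vertex of the
component with out-degree 0 in `D_j`. -/
theorem Dj_is_forest_of_in_trees
    {V : Type*} [Fintype V] [DecidableEq V]
    (G : SimpleGraph V) (s t : V) (hst : s ≠ t)
    {r : ℕ} (hr : 1 ≤ r) (P : Fin r → G.Walk s t) (hP : PathSystem P)
    (ID : Bridge G s t P → ℕ) (hID : Function.Injective ID) :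
    ∀ j : Fin r,
      (∀ βi βx βx' : Bridge G s t P,
        DArc G s t P ID j βi βx → DArc G s t P ID j βi βx' → βx = βx') ∧
      (∀ β : Bridge G s t P, ¬ Relation.TransGen (DArc G s t P ID j) β β) ∧
      (underlyingD G s t P ID j).IsAcyclic ∧
      (∀ β : Bridge G s t P,
        ∃! ρ : Bridge G s t P,
          SameCompD G s t P ID j β ρ ∧ ∀ γ, ¬ DArc G s t P ID j ρ γ) ∧
      (∀ β ρ : Bridge G s t P,
        SameCompD G s t P ID j β ρ → (∀ γ, ¬ DArc G s t P ID j ρ γ) →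
          Relation.ReflTransGen (DArc G s t P ID j) β ρ) := by
  intro j
  have hdet : ∀ ⦃a b c : Bridge G s t P⦄, DArc G s t P ID j a b →
      DArc G s t P ID j a c → b = c :=
    fun a b c h h' => out_unique G s t P ID hID j h h'
  have hlt : ∀ ⦃a b : Bridge G s t P⦄, DArc G s t P ID j a b →
      rpos G s t P a j < rpos G s t P b j :=
    fun a b h => rpos_lt G s t P hst ID j h
  refine ⟨fun βi βx βx' h h' => hdet h h', ?_, ?_, ?_, ?_⟩
  · intro β h
    exact lt_irrefl _ (transgen_lt (fun β => rpos G s t P β j) hlt h)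
  · exact acyclic_of_det (D := DArc G s t P ID j) (fun a b h => h) hdet
      (fun β => rpos G s t P β j) hlt
  · intro β
    obtain ⟨ρ, h1, h2⟩ := exists_root (D := DArc G s t P ID j)
      (fun β => rpos G s t P β j) (2 * (P j).support.length + 1)
      (fun β => rpos_le G s t P hst j β) hlt β
    refine ⟨ρ, ⟨Relation.ReflTransGen.mono (fun a b h => Or.inl h) _ _ h1, h2⟩, ?_⟩
    rintro ρ' ⟨hcomp, hroot⟩
    exact root_eq hdet (comp_to_root hdet hcomp hroot) hroot h1 h2
  · exact fun β ρ h hroot => comp_to_root hdet h hroot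

end PaperTW
end

section
/- Assume each P_j has at least one internal vertex, and suppose s and t are not mutually reachable in G_res. Let ℬ be the set of bridges β_i that are mutually reachable with s in the reachability digraph G_R. For each j ∈ {1, …, r}, define a vertex w_j of G as follows: if some β_i ∈ ℬ has an out-neighbor on P_j of the form v_in with v an internal vertex of P_j, let w_j be the internal vertex v of P_j such that v_in is the rightmost such out-neighbor over all β_i ∈ ℬ; otherwise, let w_j be the internal vertex of P_j adjacent to s. Then {w_1, …, w_r} is an s–t vertex cut of G: every s–t path in G contains some w_j. In particular, G has an s–t vertex cut of size at most r. -/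
namespace PaperTW

variable {V : Type*} [DecidableEq V]

variable (G : SimpleGraph V) (s t : V) {r : ℕ} (P : Fin r → G.Walk s t)

variable (ID : Bridge G s t P → ℕ)

/-! ### Auxiliary lemmas -/

section Aux

set_option linter.unusedSectionVars false

variable {G} {s t} {P}

lemma eq_of_indexOf_eq {α : Type*} [DecidableEq α] {a b : α} {l : List α}
    (ha : a ∈ l) (hb : b ∈ l) (h : l.idxOf a = l.idxOf b) : a = b :=
  (List.idxOf_inj ha).1 h

lemma getLast_not_mem_dropLast {α : Type*} {l : List α} (hne : l ≠ [])
    (hnd : l.Nodup) : l.getLast hne ∉ l.dropLast := by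
  intro hmem
  have hspec := List.dropLast_append_getLast hne
  rw [← hspec] at hnd
  exact (List.disjoint_of_nodup_append hnd) hmem (List.mem_singleton_self _)

variable {a b : V} {W : G.Walk a b}

lemma support_ne_nil (W : G.Walk a b) : W.support ≠ [] := by
  cases W <;> simp

lemma indexOf_end (hnd : W.support.Nodup) :
    W.support.idxOf b = W.support.length - 1 := by
  have h1 : W.support.dropLast ++ [b] = W.support := by
    have := List.dropLast_append_getLast (support_ne_nil W)
    rwa [W.getLast_support] at this
  have h2 : b ∉ W.support.dropLast := by
    have := getLast_not_mem_dropLast (support_ne_nil W) hnd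
    rwa [W.getLast_support] at this
  calc W.support.idxOf b = (W.support.dropLast ++ [b]).idxOf b := by rw [h1]
    _ = W.support.dropLast.length + [b].idxOf b := List.idxOf_append_of_notMem h2
    _ = W.support.dropLast.length := by simp
    _ = W.support.length - 1 := by rw [← h1]; simp

lemma dart_fst_ne_end (hnd : W.support.Nodup) {d : G.Dart} (hd : d ∈ W.darts) :
    d.toProd.1 ≠ b := by
  intro h
  have h1 : d.toProd.1 ∈ W.support.dropLast := by
    rw [← W.map_fst_darts]; exact List.mem_map_of_mem hd
  have h2 : b ∉ W.support.dropLast := by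
    have := getLast_not_mem_dropLast (support_ne_nil W) hnd
    rwa [W.getLast_support] at this
  rw [h] at h1; exact h2 h1

lemma dart_snd_ne_start (hnd : W.support.Nodup) {d : G.Dart} (hd : d ∈ W.darts) :
    d.toProd.2 ≠ a := by
  intro h
  have h1 : d.toProd.2 ∈ W.support.tail := by
    rw [← W.map_snd_darts]; exact List.mem_map_of_mem hd
  have h2 : a ∉ W.support.tail := by
    have := W.support_eq_cons
    rw [this] at hnd
    exact (List.nodup_cons.1 hnd).1
  rw [h] at h1; exact h2 h1

lemma indexOf_dart_snd (hnd : W.support.Nodup) {d : G.Dart} (hd : d ∈ W.darts) :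
    W.support.idxOf d.toProd.2 = W.support.idxOf d.toProd.1 + 1 := by
  induction W with
  | nil => simp at hd
  | @cons u v c h q ih =>
    rw [SimpleGraph.Walk.support_cons] at hnd
    have hu : u ∉ q.support := (List.nodup_cons.1 hnd).1
    have hndq : q.support.Nodup := (List.nodup_cons.1 hnd).2
    rw [SimpleGraph.Walk.darts_cons] at hd
    rw [SimpleGraph.Walk.support_cons]
    rcases List.mem_cons.1 hd with h1 | h1
    · subst h1
      simp only [SimpleGraph.Dart.toProd]
      have hvmem : v ∈ q.support := q.start_mem_support
      have hvne : v ≠ u := by rintro rfl; exact hu hvmem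
      rw [List.idxOf_cons_self]
      rw [List.idxOf_cons_ne _ hvne.symm]
      · congr 1
        rw [q.support_eq_cons, List.idxOf_cons_self]
    · have hfst : d.toProd.1 ∈ q.support := q.dart_fst_mem_support_of_mem_darts h1
      have hsnd : d.toProd.2 ∈ q.support := q.dart_snd_mem_support_of_mem_darts h1
      have hf : d.toProd.1 ≠ u := by rintro h; rw [h] at hfst; exact hu hfst
      have hs : d.toProd.2 ≠ u := by rintro h; rw [h] at hsnd; exact hu hsnd
      rw [List.idxOf_cons_ne, List.idxOf_cons_ne, ih hndq h1]
      · exact hf.symm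
      · exact hs.symm

lemma Traversed.adj {W : G.Walk a b} {u v : V} (h : Traversed W u v) : G.Adj u v := by
  obtain ⟨d, _, hd⟩ := h
  have := d.adj; rwa [hd] at this

lemma Traversed.fst_mem {W : G.Walk a b} {u v : V} (h : Traversed W u v) : u ∈ W.support := by
  obtain ⟨d, hmem, hd⟩ := h
  have := W.dart_fst_mem_support_of_mem_darts hmem; rwa [hd] at this

lemma Traversed.snd_mem {W : G.Walk a b} {u v : V} (h : Traversed W u v) : v ∈ W.support := by
  obtain ⟨d, hmem, hd⟩ := h
  have := W.dart_snd_mem_support_of_mem_darts hmem; rwa [hd] at this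

lemma Traversed.fst_ne_end {W : G.Walk a b} {u v : V} (hnd : W.support.Nodup)
    (h : Traversed W u v) : u ≠ b := by
  obtain ⟨d, hmem, hd⟩ := h
  have := dart_fst_ne_end hnd hmem; rwa [hd] at this

lemma Traversed.snd_ne_start {W : G.Walk a b} {u v : V} (hnd : W.support.Nodup)
    (h : Traversed W u v) : v ≠ a := by
  obtain ⟨d, hmem, hd⟩ := h
  have := dart_snd_ne_start hnd hmem; rwa [hd] at this

lemma Traversed.indexOf {W : G.Walk a b} {u v : V} (hnd : W.support.Nodup)
    (h : Traversed W u v) : W.support.idxOf v = W.support.idxOf u + 1 := by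
  obtain ⟨d, hmem, hd⟩ := h
  have := indexOf_dart_snd hnd hmem; rwa [hd] at this

lemma indexOf_start (W : G.Walk a b) : W.support.idxOf a = 0 := by
  rw [W.support_eq_cons]; exact List.idxOf_cons_self

lemma eq_start_of_indexOf_eq_zero {W : G.Walk a b} {v : V} (hv : v ∈ W.support)
    (h : W.support.idxOf v = 0) : v = a :=
  eq_of_indexOf_eq hv W.start_mem_support (by rw [h, indexOf_start])

lemma not_traversed_s_t (hP : PathSystem P) (hint : ∀ j : Fin r, ∃ v, Internal (P j) v)
    (j : Fin r) : ¬ Traversed (P j) s t := by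
  intro h
  have hnd := (hP.1 j).support_nodup
  have h1 : (P j).support.idxOf t = 1 := by
    rw [h.indexOf hnd, indexOf_start]
  have h2 : (P j).support.idxOf t = (P j).support.length - 1 := indexOf_end hnd
  have hlen : (P j).support.length = 2 := by omega
  obtain ⟨v, hv⟩ := hint j
  have hv1 : (P j).support.idxOf v < 2 := by
    rw [← hlen]; exact List.idxOf_lt_length_iff.2 hv.1
  have hv2 : (P j).support.idxOf v ≠ 0 := fun hh => hv.2.1 (eq_start_of_indexOf_eq_zero hv.1 hh)
  have hv3 : (P j).support.idxOf v = 1 := by omega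
  exact hv.2.2 (eq_of_indexOf_eq hv.1 (P j).end_mem_support (by rw [hv3, h1]))

lemma traversed_or_of_mem_edges {j : Fin r} {u v : V} (h : s(u, v) ∈ (P j).edges) :
    Traversed (P j) u v ∨ Traversed (P j) v u := by
  have : ∃ d ∈ (P j).darts, d.edge = s(u, v) := List.mem_map.1 h
  obtain ⟨d, hmem, hd⟩ := this
  rcases Sym2.eq_iff.1 hd with ⟨h1, h2⟩ | ⟨h1, h2⟩
  · exact Or.inl ⟨d, hmem, by rw [← h1, ← h2]⟩
  · exact Or.inr ⟨d, hmem, by rw [← h1, ← h2]⟩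

lemma not_adj_s_t (hP : PathSystem P) (hint : ∀ j : Fin r, ∃ v, Internal (P j) v)
    (hE : ∀ u v : V, G.Adj u v →
      (u = s ∨ u = t ∨ ∃ j, u ∈ (P j).support) →
      (v = s ∨ v = t ∨ ∃ j, v ∈ (P j).support) →
      ∃ j, s(u, v) ∈ (P j).edges) : ¬ G.Adj s t := by
  intro h
  obtain ⟨j, hj⟩ := hE s t h (Or.inl rfl) (Or.inr (Or.inl rfl))
  rcases traversed_or_of_mem_edges hj with h1 | h1
  · exact not_traversed_s_t hP hint j h1
  · exact h1.fst_ne_end (hP.1 j).support_nodup rfl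

lemma second_vertex_internal (hP : PathSystem P) (hint : ∀ j : Fin r, ∃ v, Internal (P j) v)
    {j : Fin r} {v : V} (h : Traversed (P j) s v) : Internal (P j) v := by
  refine ⟨h.snd_mem, h.adj.ne', ?_⟩
  rintro rfl
  exact not_traversed_s_t hP hint j h

lemma edge_from_s (hP : PathSystem P) (hint : ∀ j : Fin r, ∃ v, Internal (P j) v)
    {j : Fin r} {v : V} (h : s(s, v) ∈ (P j).edges) :
    Traversed (P j) s v ∧ (P j).support.idxOf v = 1 := by
  have hnd := (hP.1 j).support_nodup
  rcases traversed_or_of_mem_edges h with h1 | h1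
  · exact ⟨h1, by rw [h1.indexOf hnd, indexOf_start]⟩
  · exact absurd rfl (h1.snd_ne_start hnd)

/-! ### `offPath`, `collapse`, `vout`, `toGR` computations -/

lemma s_not_offPath : s ∉ offPath G s t P := fun h => h.1 rfl

lemma t_not_offPath : t ∉ offPath G s t P := fun h => h.2.1 rfl

lemma not_offPath_of_mem_support {j : Fin r} {v : V} (h : v ∈ (P j).support) :
    v ∉ offPath G s t P := fun hh => hh.2.2 j h

lemma offPath_not_internal {v : V} (h : v ∈ offPath G s t P) (j : Fin r) :
    ¬ Internal (P j) v := fun hh => h.2.2 j hh.1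

lemma collapse_inl (v : V) : collapse G s t P (Sum.inl v) = Sum.inl v := rfl

lemma collapse_vin (v : V) : collapse G s t P (vin v) = Sum.inl v := rfl

lemma vout_s : vout s t s = Sum.inl s := by simp [vout]

lemma vout_t : vout s t t = Sum.inl t := by simp [vout]

lemma collapse_vout_internal {j : Fin r} {v : V} (h : Internal (P j) v) :
    collapse G s t P (vout s t v) = Sum.inr v := by
  rw [vout, if_neg (by rintro (h1 | h1) <;> [exact h.2.1 h1; exact h.2.2 h1])]
  rw [collapse, if_pos ⟨j, h⟩]

lemma collapse_vout_offPath {v : V} (h : v ∈ offPath G s t P) :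
    collapse G s t P (vout s t v) = Sum.inl v := by
  rw [vout, if_neg (by rintro (h1 | h1) <;> [exact h.1 h1; exact h.2.1 h1])]
  rw [collapse, if_neg (by rintro ⟨j, hj⟩; exact offPath_not_internal h j hj)]

lemma toGR_inl_not_off {v : V} (h : v ∉ offPath G s t P) :
    toGR G s t P (Sum.inl v) = Sum.inl (Sum.inl v) := by
  rw [toGR, dif_neg h]

lemma toGR_inr_not_off {v : V} (h : v ∉ offPath G s t P) :
    toGR G s t P (Sum.inr v) = Sum.inl (Sum.inr v) := by
  rw [toGR, dif_neg h]

lemma toGR_inl_off {v : V} (h : v ∈ offPath G s t P) :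
    toGR G s t P (Sum.inl v) =
      Sum.inr ((G.induce (offPath G s t P)).connectedComponentMk ⟨v, h⟩) := by
  rw [toGR, dif_pos h]

lemma posOn_internal {j : Fin r} {v : V} (h : Internal (P j) v) :
    posOn G s t P j (Sum.inl v) = 2 * (P j).support.idxOf v := by
  rw [posOn, if_neg h.2.1, if_neg h.2.2]

/-! ### Arc constructors and deleted-arc analysis -/

lemma resArc_mk {x y : V ⊕ V} (h : SplitArc G s t P x y) :
    ResArc G s t P (collapse G s t P x) (collapse G s t P y) := ⟨x, y, h, rfl, rfl⟩

lemma deletedArc_elim (hP : PathSystem P) {x y : V ⊕ V} (h : DeletedArc G s t P x y) :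
    ∃ (j : Fin r) (u v : V), Traversed (P j) u v ∧ y = Sum.inl u ∧
      u ∈ (P j).support ∧ u ≠ t ∧
      ((v ∈ (P j).support ∧ v ≠ s ∧ v ≠ t ∧ x = Sum.inr v) ∨ (v = t ∧ x = Sum.inl t)) := by
  obtain ⟨u, v, ⟨j, htr⟩, hx, hy⟩ := h
  have hnd := (hP.1 j).support_nodup
  refine ⟨j, u, v, htr, hy, htr.fst_mem, htr.fst_ne_end hnd, ?_⟩
  by_cases hvt : v = t
  · subst hvt
    right
    exact ⟨rfl, by rw [hx, vout_t, collapse_inl]⟩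
  · left
    have hint' : Internal (P j) v := ⟨htr.snd_mem, htr.snd_ne_start hnd, hvt⟩
    exact ⟨htr.snd_mem, htr.snd_ne_start hnd, hvt, by rw [hx, collapse_vout_internal hint']⟩

lemma not_deleted_inl_src (hP : PathSystem P) {z : V} (hz : z ≠ t) (y : V ⊕ V) :
    ¬ DeletedArc G s t P (Sum.inl z) y := by
  intro h
  obtain ⟨j, u, v, _, _, _, _, hc⟩ := deletedArc_elim hP h
  rcases hc with ⟨_, _, _, hx⟩ | ⟨_, hx⟩
  · simp at hx
  · exact hz (Sum.inl.inj hx)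

lemma not_deleted_tgt_off (hP : PathSystem P) {u : V} (hu : ∀ j, u ∉ (P j).support)
    (x : V ⊕ V) : ¬ DeletedArc G s t P x (Sum.inl u) := by
  intro h
  obtain ⟨j, u', v, _, hy, hmem, _, _⟩ := deletedArc_elim hP h
  rw [← Sum.inl.inj hy] at hmem
  exact hu j hmem

lemma not_deleted_back (hP : PathSystem P) {z : V} :
    ¬ DeletedArc G s t P (Sum.inr z) (Sum.inl z) := by
  intro h
  obtain ⟨j, u, v, htr, hy, _, _, hc⟩ := deletedArc_elim hP h
  rcases hc with ⟨_, _, _, hx⟩ | ⟨_, hx⟩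
  · rw [← Sum.inl.inj hy] at htr
    rw [← Sum.inr.inj hx] at htr
    exact G.irrefl htr.adj
  · simp at hx

lemma not_deleted_tgt_inr (hP : PathSystem P) {z : V} (x : V ⊕ V) :
    ¬ DeletedArc G s t P x (Sum.inr z) := by
  intro h
  obtain ⟨j, u, v, _, hy, _⟩ := deletedArc_elim hP h
  simp at hy

lemma grArc_mk {x y : V ⊕ V} (harc : ResArc G s t P x y) (hnd : ¬ DeletedArc G s t P x y)
    (hne : toGR G s t P x ≠ toGR G s t P y) :
    GRArc G s t P (toGR G s t P x) (toGR G s t P y) :=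
  ⟨⟨x, y, ⟨harc, hnd⟩, rfl, rfl⟩, hne⟩

/-! ### Reachability lemmas -/

lemma resReach_of_walk {x y : offPath G s t P}
    (W : (G.induce (offPath G s t P)).Walk x y) :
    Relation.ReflTransGen (ResArc G s t P) (Sum.inl (x : V)) (Sum.inl (y : V)) := by
  induction W with
  | nil => exact Relation.ReflTransGen.refl
  | @cons x z y h q ih =>
    have hadj : G.Adj (x : V) (z : V) := h
    have hedges : ∀ j, s((x : V), (z : V)) ∉ (P j).edges := fun j hj =>
      x.2.2.2 j ((P j).fst_mem_support_of_mem_edges hj)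
    have harc := resArc_mk (SplitArc.offpath (G := G) (s := s) (t := t) (P := P)
      (x : V) (z : V) hadj hedges)
    rw [collapse_vout_offPath x.2, collapse_vin] at harc
    exact Relation.ReflTransGen.head harc ih

lemma resReach_of_sameBridge {u v : V} (hu : u ∈ offPath G s t P) (hv : v ∈ offPath G s t P)
    (h : (G.induce (offPath G s t P)).connectedComponentMk ⟨u, hu⟩ =
         (G.induce (offPath G s t P)).connectedComponentMk ⟨v, hv⟩) :
    Relation.ReflTransGen (ResArc G s t P) (Sum.inl u) (Sum.inl v) := by
  obtain ⟨W⟩ := SimpleGraph.ConnectedComponent.exact h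
  exact resReach_of_walk W

lemma internal_of_inr_mem_range {z : V} (h : Sum.inr z ∈ Set.range (collapse G s t P)) :
    ∃ j, Internal (P j) z := by
  obtain ⟨a, ha⟩ := h
  match a with
  | Sum.inl w => exact absurd ha (by rw [collapse_inl]; simp)
  | Sum.inr w =>
    rw [collapse] at ha
    split at ha
    · next hint' => rw [Sum.inr.inj ha] at hint'; exact hint'
    · exact absurd ha (by simp)

lemma resReach_of_toGR_eq {x y : V ⊕ V} (hx : x ∈ Set.range (collapse G s t P))
    (hy : y ∈ Set.range (collapse G s t P)) (h : toGR G s t P x = toGR G s t P y) :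
    Relation.ReflTransGen (ResArc G s t P) x y := by
  match x, y with
  | Sum.inl u, Sum.inl v =>
    by_cases hu : u ∈ offPath G s t P
    · by_cases hv : v ∈ offPath G s t P
      · rw [toGR_inl_off hu, toGR_inl_off hv] at h
        exact resReach_of_sameBridge hu hv (Sum.inr.inj h)
      · rw [toGR_inl_off hu, toGR_inl_not_off hv] at h; exact absurd h (by simp)
    · by_cases hv : v ∈ offPath G s t P
      · rw [toGR_inl_not_off hu, toGR_inl_off hv] at h; exact absurd h (by simp)
      · rw [toGR_inl_not_off hu, toGR_inl_not_off hv] at h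
        rw [Sum.inl.inj (Sum.inl.inj h)]
  | Sum.inl u, Sum.inr v =>
    obtain ⟨j, hj⟩ := internal_of_inr_mem_range hy
    have hv : v ∉ offPath G s t P := not_offPath_of_mem_support hj.1
    rw [toGR_inr_not_off hv] at h
    by_cases hu : u ∈ offPath G s t P
    · rw [toGR_inl_off hu] at h; exact absurd h (by simp)
    · rw [toGR_inl_not_off hu] at h; exact absurd h (by simp)
  | Sum.inr u, Sum.inl v =>
    obtain ⟨j, hj⟩ := internal_of_inr_mem_range hx
    have hu : u ∉ offPath G s t P := not_offPath_of_mem_support hj.1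
    rw [toGR_inr_not_off hu] at h
    by_cases hv : v ∈ offPath G s t P
    · rw [toGR_inl_off hv] at h; exact absurd h (by simp)
    · rw [toGR_inl_not_off hv] at h; exact absurd h (by simp)
  | Sum.inr u, Sum.inr v =>
    obtain ⟨j, hj⟩ := internal_of_inr_mem_range hx
    obtain ⟨j', hj'⟩ := internal_of_inr_mem_range hy
    rw [toGR_inr_not_off (not_offPath_of_mem_support hj.1),
      toGR_inr_not_off (not_offPath_of_mem_support hj'.1)] at h
    rw [Sum.inr.inj (Sum.inl.inj h)]

lemma mem_range_of_resArc_src {x y : V ⊕ V} (h : ResArc G s t P x y) :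
    x ∈ Set.range (collapse G s t P) := by
  obtain ⟨a, b, _, hx, _⟩ := h; exact ⟨a, hx.symm⟩

lemma mem_range_of_resArc_tgt {x y : V ⊕ V} (h : ResArc G s t P x y) :
    y ∈ Set.range (collapse G s t P) := by
  obtain ⟨a, b, _, _, hy⟩ := h; exact ⟨b, hy.symm⟩

lemma resReach_of_grReach {X Y : GRV G s t P}
    (h : Relation.ReflTransGen (GRArc G s t P) X Y) :
    ∀ x y : V ⊕ V, x ∈ Set.range (collapse G s t P) → y ∈ Set.range (collapse G s t P) →
      toGR G s t P x = X → toGR G s t P y = Y →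
      Relation.ReflTransGen (ResArc G s t P) x y := by
  induction h with
  | refl =>
    intro x y hx hy hX hY
    exact resReach_of_toGR_eq hx hy (hX.trans hY.symm)
  | tail _ harc ih =>
    intro x y hx hy hX hY
    obtain ⟨⟨a', b', hreach, hY'a, hYb⟩, _⟩ := harc
    have ha' : a' ∈ Set.range (collapse G s t P) := mem_range_of_resArc_src hreach.1
    have hb' : b' ∈ Set.range (collapse G s t P) := mem_range_of_resArc_tgt hreach.1
    refine ((ih x a' hx ha' hX hY'a.symm).tail hreach.1).trans ?_
    exact resReach_of_toGR_eq hb' hy (hYb.symm.trans hY.symm)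

lemma resReach_t_to_s_aux (j : Fin r) :
    ∀ {a c : V} (W : G.Walk a c), (∀ d ∈ W.darts, d ∈ (P j).darts) →
      (∀ v ∈ W.support, v ∈ (P j).support) →
      Relation.ReflTransGen (ResArc G s t P) (collapse G s t P (vout s t c))
        (collapse G s t P (vout s t a)) := by
  intro a c W
  induction W with
  | nil =>
    intro _ _
    exact Relation.ReflTransGen.refl
  | @cons a c c' h q ih =>
    intro hd hs'
    have hdartmem : (⟨(a, c), h⟩ : G.Dart) ∈ (P j).darts := by
      apply hd; rw [SimpleGraph.Walk.darts_cons]; exact List.mem_cons_self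
    have htr : Traversed (P j) a c := ⟨_, hdartmem, rfl⟩
    have ih' := ih (fun d hdd => hd d (by rw [SimpleGraph.Walk.darts_cons]; exact List.mem_cons_of_mem _ hdd))
      (fun v hv => hs' v (by rw [SimpleGraph.Walk.support_cons]; exact List.mem_cons_of_mem _ hv))
    have step1 : Relation.ReflTransGen (ResArc G s t P) (collapse G s t P (vout s t c))
        (Sum.inl c) := by
      by_cases hcs : c = s
      · subst hcs; rw [vout_s, collapse_inl]
      · by_cases hct : c = t
        · subst hct; rw [vout_t, collapse_inl]
        · have hcint : Internal (P j) c := ⟨hs' c (by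
            rw [SimpleGraph.Walk.support_cons]
            exact List.mem_cons_of_mem _ q.start_mem_support), hcs, hct⟩
          exact Relation.ReflTransGen.single (resArc_mk (SplitArc.back c j hcint))
    have step2 : ResArc G s t P (Sum.inl c) (collapse G s t P (vout s t a)) := by
      have := resArc_mk (SplitArc.pathRev' (G := G) (s := s) (t := t) (P := P) a c j htr)
      rwa [collapse_vin] at this
    exact ((ih'.trans step1).tail step2)

lemma resReach_t_to_s (j : Fin r) :
    Relation.ReflTransGen (ResArc G s t P) (Sum.inl t) (Sum.inl s) := by
  have := resReach_t_to_s_aux (G := G) (s := s) (t := t) (P := P) j (P j)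
    (fun d hd => hd) (fun v hv => hv)
  rwa [vout_s, vout_t, collapse_inl, collapse_inl] at this

/-! ### Descent along a path in the reachability digraph -/

lemma grReach_step_back (hP : PathSystem P) {j : Fin r} {c : V} (hc : c ∈ (P j).support) :
    Relation.ReflTransGen (GRArc G s t P) (toGR G s t P (collapse G s t P (vout s t c)))
      (toGR G s t P (Sum.inl c)) := by
  by_cases hcs : c = s
  · subst hcs; rw [vout_s, collapse_inl]
  · by_cases hct : c = t
    · subst hct; rw [vout_t, collapse_inl]
    · have hcint : Internal (P j) c := ⟨hc, hcs, hct⟩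
      have harc := resArc_mk (SplitArc.back c j hcint)
      rw [collapse_vout_internal hcint, collapse_vin] at harc
      have hgr := grArc_mk harc (not_deleted_back hP)
        (by rw [toGR_inr_not_off (not_offPath_of_mem_support hc),
          toGR_inl_not_off (not_offPath_of_mem_support hc)]; simp)
      rw [collapse_vout_internal hcint]
      exact Relation.ReflTransGen.single hgr

lemma grArc_pathRev' (hP : PathSystem P) (hint : ∀ j : Fin r, ∃ v, Internal (P j) v)
    {j : Fin r} {a c : V} (htr : Traversed (P j) a c) :
    GRArc G s t P (toGR G s t P (Sum.inl c)) (toGR G s t P (collapse G s t P (vout s t a))) := by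
  have hnd := (hP.1 j).support_nodup
  have harc := resArc_mk (SplitArc.pathRev' (G := G) (s := s) (t := t) (P := P) a c j htr)
  rw [collapse_vin] at harc
  have hcs : c ≠ s := htr.snd_ne_start hnd
  have hat : a ≠ t := htr.fst_ne_end hnd
  by_cases has : a = s
  · subst has
    rw [vout_s, collapse_inl] at harc ⊢
    refine grArc_mk harc ?_ ?_
    · have hcint : Internal (P j) c := second_vertex_internal hP hint htr
      by_cases hct : c = t
      · subst hct; exact absurd htr (not_traversed_s_t hP hint j)
      · exact not_deleted_inl_src hP hct _
    · rw [toGR_inl_not_off (not_offPath_of_mem_support htr.snd_mem),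
        toGR_inl_not_off (s_not_offPath)]
      simp only [ne_eq, Sum.inl.injEq]
      exact fun hh => hcs hh
  · have haint : Internal (P j) a := ⟨htr.fst_mem, has, hat⟩
    rw [collapse_vout_internal haint] at harc ⊢
    refine grArc_mk harc ?_ ?_
    · exact not_deleted_tgt_inr hP _
    · rw [toGR_inl_not_off (not_offPath_of_mem_support htr.snd_mem),
        toGR_inr_not_off (not_offPath_of_mem_support htr.fst_mem)]
      simp
  
lemma grReach_desc (hP : PathSystem P) (hint : ∀ j : Fin r, ∃ v, Internal (P j) v)
    {j : Fin r} :
    ∀ {a c : V} (W : G.Walk a c), ¬ W.Nil → (∀ d ∈ W.darts, d ∈ (P j).darts) →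
      (∀ v ∈ W.support, v ∈ (P j).support) →
      Relation.ReflTransGen (GRArc G s t P) (toGR G s t P (Sum.inl c))
        (toGR G s t P (collapse G s t P (vout s t a))) := by
  intro a c W
  induction W with
  | nil => intro hnil; exact absurd SimpleGraph.Walk.Nil.nil hnil
  | @cons a b c h q ih =>
    intro _ hd hs'
    have hdartmem : (⟨(a, b), h⟩ : G.Dart) ∈ (P j).darts := by
      apply hd; rw [SimpleGraph.Walk.darts_cons]; exact List.mem_cons_self
    have htr : Traversed (P j) a b := ⟨_, hdartmem, rfl⟩
    by_cases hq : q.Nil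
    · have hbc : b = c := hq.eq
      subst hbc
      exact Relation.ReflTransGen.single (grArc_pathRev' hP hint htr)
    · have ih' := ih hq
        (fun d hdd => hd d (by rw [SimpleGraph.Walk.darts_cons]; exact List.mem_cons_of_mem _ hdd))
        (fun v hv => hs' v (by rw [SimpleGraph.Walk.support_cons]; exact List.mem_cons_of_mem _ hv))
      have hbmem : b ∈ (P j).support := hs' b (by
        rw [SimpleGraph.Walk.support_cons]
        exact List.mem_cons_of_mem _ q.start_mem_support)
      exact ((ih'.trans (grReach_step_back hP hbmem)).tail (grArc_pathRev' hP hint htr))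

lemma grReach_vin_to_s (hP : PathSystem P) (hint : ∀ j : Fin r, ∃ v, Internal (P j) v)
    {j : Fin r} {v : V} (hv : Internal (P j) v) :
    Relation.ReflTransGen (GRArc G s t P) (toGR G s t P (Sum.inl v))
      (Sum.inl (Sum.inl s)) := by
  have hW := grReach_desc hP hint (j := j) ((P j).takeUntil v hv.1)
    (fun hn => hv.2.1 hn.eq.symm)
    (fun d hd => (P j).darts_takeUntil_subset hv.1 hd)
    (fun x hx => (P j).support_takeUntil_subset hv.1 hx)
  rwa [vout_s, collapse_inl, toGR_inl_not_off s_not_offPath] at hW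

lemma mem_takeUntil_of_indexOf_le {a b : V} {W : G.Walk a b} {u v : V}
    (hu : u ∈ W.support) (hv : v ∈ W.support)
    (hle : W.support.idxOf u ≤ W.support.idxOf v) :
    u ∈ (W.takeUntil v hv).support := by
  by_contra hmem
  have hsplit : (W.takeUntil v hv).support ++ (W.dropUntil v hv).support.tail = W.support := by
    rw [← SimpleGraph.Walk.support_append, SimpleGraph.Walk.take_spec]
  have h1 : W.support.idxOf v < (W.takeUntil v hv).support.length := by
    rw [← hsplit, List.idxOf_append_of_mem (W.takeUntil v hv).end_mem_support]
    exact List.idxOf_lt_length_iff.2 (W.takeUntil v hv).end_mem_support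
  have h2 : (W.takeUntil v hv).support.length ≤ W.support.idxOf u := by
    rw [← hsplit, List.idxOf_append_of_notMem hmem]
    exact Nat.le_add_right _ _
  omega

lemma grReach_vin_to_vout (hP : PathSystem P) (hint : ∀ j : Fin r, ∃ v, Internal (P j) v)
    {j : Fin r} {u v : V} (hu : Internal (P j) u) (hv : Internal (P j) v)
    (hlt : (P j).support.idxOf u < (P j).support.idxOf v) :
    Relation.ReflTransGen (GRArc G s t P) (toGR G s t P (Sum.inl v))
      (toGR G s t P (Sum.inr u)) := by
  have humem : u ∈ ((P j).takeUntil v hv.1).support :=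
    mem_takeUntil_of_indexOf_le hu.1 hv.1 hlt.le
  have hune : u ≠ v := fun hh => by rw [hh] at hlt; omega
  have hW := grReach_desc hP hint (j := j) (((P j).takeUntil v hv.1).dropUntil u humem)
    (fun hn => hune hn.eq)
    (fun d hd => (P j).darts_takeUntil_subset hv.1
      ((((P j).takeUntil v hv.1)).darts_dropUntil_subset humem hd))
    (fun x hx => (P j).support_takeUntil_subset hv.1
      ((((P j).takeUntil v hv.1)).support_dropUntil_subset humem hx))
  rwa [collapse_vout_internal hu] at hW

/-! ### Specific arcs of the reachability digraph -/

lemma grArc_s_off (hst : s ≠ t) (hP : PathSystem P) {v : V} (hv : v ∈ offPath G s t P)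
    (hadj : G.Adj s v) :
    GRArc G s t P (Sum.inl (Sum.inl s))
      (Sum.inr ((G.induce (offPath G s t P)).connectedComponentMk ⟨v, hv⟩)) := by
  have hedges : ∀ j, s(s, v) ∉ (P j).edges := fun j hj =>
    hv.2.2 j ((P j).snd_mem_support_of_mem_edges hj)
  have harc := resArc_mk (SplitArc.offpath (G := G) (s := s) (t := t) (P := P) s v hadj hedges)
  rw [vout_s, collapse_inl, collapse_vin] at harc
  have hgr := grArc_mk harc (not_deleted_inl_src hP hst _)
    (by rw [toGR_inl_not_off s_not_offPath, toGR_inl_off hv]; simp)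
  rwa [toGR_inl_not_off s_not_offPath, toGR_inl_off hv] at hgr

lemma grArc_off_to (hP : PathSystem P) {u x : V} (hu : u ∈ offPath G s t P)
    (hadj : G.Adj u x) (hxt : x ≠ t) (hxoff : x ∉ offPath G s t P) :
    GRArc G s t P (Sum.inr ((G.induce (offPath G s t P)).connectedComponentMk ⟨u, hu⟩))
      (Sum.inl (Sum.inl x)) := by
  have hedges : ∀ j, s(u, x) ∉ (P j).edges := fun j hj =>
    hu.2.2 j ((P j).fst_mem_support_of_mem_edges hj)
  have harc := resArc_mk (SplitArc.offpath (G := G) (s := s) (t := t) (P := P) u x hadj hedges)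
  rw [collapse_vout_offPath hu, collapse_vin] at harc
  have hgr := grArc_mk harc (not_deleted_inl_src hP hu.2.1 _)
    (by rw [toGR_inl_off hu, toGR_inl_not_off hxoff]; simp)
  rwa [toGR_inl_off hu, toGR_inl_not_off hxoff] at hgr

lemma grArc_internal_to_off (hP : PathSystem P) {j : Fin r} {u x : V}
    (hu : Internal (P j) u) (hx : x ∈ offPath G s t P) (hadj : G.Adj u x) :
    GRArc G s t P (Sum.inl (Sum.inr u))
      (Sum.inr ((G.induce (offPath G s t P)).connectedComponentMk ⟨x, hx⟩)) := by
  have hedges : ∀ j', s(u, x) ∉ (P j').edges := fun j' hj =>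
    hx.2.2 j' ((P j').snd_mem_support_of_mem_edges hj)
  have harc := resArc_mk (SplitArc.offpath (G := G) (s := s) (t := t) (P := P) u x hadj hedges)
  rw [collapse_vout_internal hu, collapse_vin] at harc
  have hgr := grArc_mk harc (not_deleted_tgt_off hP (fun j' => hx.2.2 j') _)
    (by rw [toGR_inr_not_off (not_offPath_of_mem_support hu.1), toGR_inl_off hx]; simp)
  rwa [toGR_inr_not_off (not_offPath_of_mem_support hu.1), toGR_inl_off hx] at hgr

lemma resArc_off_to {u x : V} (hu : u ∈ offPath G s t P) (hadj : G.Adj u x) :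
    ResArc G s t P (Sum.inl u) (Sum.inl x) := by
  have hedges : ∀ j, s(u, x) ∉ (P j).edges := fun j hj =>
    hu.2.2 j ((P j).fst_mem_support_of_mem_edges hj)
  have harc := resArc_mk (SplitArc.offpath (G := G) (s := s) (t := t) (P := P) u x hadj hedges)
  rwa [collapse_vout_offPath hu, collapse_vin] at harc

lemma support_unique (hP : PathSystem P) {j j' : Fin r} {v : V} (hj : v ∈ (P j).support)
    (hj' : v ∈ (P j').support) (hvs : v ≠ s) (hvt : v ≠ t) : j = j' := by
  by_contra hne
  rcases hP.2 j j' hne v hj hj' with h1 | h1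
  exacts [hvs h1, hvt h1]

end Aux

/-- The set of vertices on the `s`-side of the cut. -/
def Lset (w : Fin r → V) : Set V :=
  {v | v = s ∨ (∃ β, BridgeWithS G s t P β ∧ InBridge G s t P β v) ∨
    ∃ j, Internal (P j) v ∧ (P j).support.idxOf v ≤ (P j).support.idxOf (w j)}

section Closure

set_option linter.unusedSectionVars false

variable {G} {s t} {P} {w : Fin r → V}

lemma internal_w
    (hw1 : ∀ j : Fin r,
      (∃ β : Bridge G s t P, BridgeWithS G s t P β ∧
          ∃ u, Internal (P j) u ∧ GRArc G s t P (Sum.inr β) (Sum.inl (Sum.inl u))) →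
        Internal (P j) (w j) ∧
        (∃ β : Bridge G s t P, BridgeWithS G s t P β ∧
          GRArc G s t P (Sum.inr β) (Sum.inl (Sum.inl (w j)))) ∧
        ∀ (β : Bridge G s t P) (u : V), BridgeWithS G s t P β → Internal (P j) u →
          GRArc G s t P (Sum.inr β) (Sum.inl (Sum.inl u)) →
            posOn G s t P j (Sum.inl u) ≤ posOn G s t P j (Sum.inl (w j)))
    (hw2 : ∀ j : Fin r,
      (¬ ∃ β : Bridge G s t P, BridgeWithS G s t P β ∧
          ∃ u, Internal (P j) u ∧ GRArc G s t P (Sum.inr β) (Sum.inl (Sum.inl u))) →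
        Internal (P j) (w j) ∧ G.Adj s (w j)) (j : Fin r) :
    Internal (P j) (w j) := by
  by_cases hb : ∃ β : Bridge G s t P, BridgeWithS G s t P β ∧
      ∃ u, Internal (P j) u ∧ GRArc G s t P (Sum.inr β) (Sum.inl (Sum.inl u))
  · exact (hw1 j hb).1
  · exact (hw2 j hb).1

lemma closure_L (hst : s ≠ t) (hr : 1 ≤ r) (hP : PathSystem P)
    (hE : ∀ u v : V, G.Adj u v →
      (u = s ∨ u = t ∨ ∃ j, u ∈ (P j).support) →
      (v = s ∨ v = t ∨ ∃ j, v ∈ (P j).support) →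
      ∃ j, s(u, v) ∈ (P j).edges)
    (hint : ∀ j : Fin r, ∃ v, Internal (P j) v)
    (hnsc : ¬ (Relation.ReflTransGen (ResArc G s t P) (Sum.inl s) (Sum.inl t) ∧
               Relation.ReflTransGen (ResArc G s t P) (Sum.inl t) (Sum.inl s)))
    (hw1 : ∀ j : Fin r,
      (∃ β : Bridge G s t P, BridgeWithS G s t P β ∧
          ∃ u, Internal (P j) u ∧ GRArc G s t P (Sum.inr β) (Sum.inl (Sum.inl u))) →
        Internal (P j) (w j) ∧
        (∃ β : Bridge G s t P, BridgeWithS G s t P β ∧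
          GRArc G s t P (Sum.inr β) (Sum.inl (Sum.inl (w j)))) ∧
        ∀ (β : Bridge G s t P) (u : V), BridgeWithS G s t P β → Internal (P j) u →
          GRArc G s t P (Sum.inr β) (Sum.inl (Sum.inl u)) →
            posOn G s t P j (Sum.inl u) ≤ posOn G s t P j (Sum.inl (w j)))
    (hw2 : ∀ j : Fin r,
      (¬ ∃ β : Bridge G s t P, BridgeWithS G s t P β ∧
          ∃ u, Internal (P j) u ∧ GRArc G s t P (Sum.inr β) (Sum.inl (Sum.inl u))) →
        Internal (P j) (w j) ∧ G.Adj s (w j))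
    {u v : V} (hu : u ∈ Lset G s t P w) (hnw : ∀ j, u ≠ w j) (hadj : G.Adj u v) :
    v ∈ Lset G s t P w := by
  have hstrict : ∀ j : Fin r, Internal (P j) u →
      (P j).support.idxOf u ≤ (P j).support.idxOf (w j) →
      (P j).support.idxOf u < (P j).support.idxOf (w j) ∧
      (∃ β : Bridge G s t P, BridgeWithS G s t P β ∧
        ∃ z, Internal (P j) z ∧ GRArc G s t P (Sum.inr β) (Sum.inl (Sum.inl z))) := by
    intro j hju hle
    have hwint : Internal (P j) (w j) := internal_w hw1 hw2 j
    have hlt : (P j).support.idxOf u < (P j).support.idxOf (w j) := by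
      rcases lt_or_eq_of_le hle with h | h
      · exact h
      · exact absurd (eq_of_indexOf_eq hju.1 hwint.1 h) (hnw j)
    refine ⟨hlt, ?_⟩
    by_contra hb
    obtain ⟨hwint', hadjs⟩ := hw2 j hb
    obtain ⟨j'', hedge⟩ := hE s (w j) hadjs (Or.inl rfl) (Or.inr (Or.inr ⟨j, hwint'.1⟩))
    have hj'' : j'' = j := support_unique hP ((P j'').snd_mem_support_of_mem_edges hedge)
      hwint'.1 hwint'.2.1 hwint'.2.2
    rw [hj''] at hedge
    have hidx1 : (P j).support.idxOf (w j) = 1 := (edge_from_s hP hint hedge).2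
    rw [hidx1] at hlt
    have hidx0 : (P j).support.idxOf u = 0 := by omega
    exact hju.2.1 (eq_start_of_indexOf_eq_zero hju.1 hidx0)
  by_cases hvoff : v ∈ offPath G s t P
  · -- Case A : `v` lies in a bridge; show this bridge is mutually reachable with `s`.
    set βv := (G.induce (offPath G s t P)).connectedComponentMk ⟨v, hvoff⟩ with hβv
    suffices hBS : BridgeWithS G s t P βv by
      exact Or.inr (Or.inl ⟨βv, hBS, ⟨hvoff, rfl⟩⟩)
    rcases hu with rfl | ⟨β₀, hβ₀S, hβ₀off, hβ₀comp⟩ | ⟨j, hju, hle⟩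
    · exact ⟨Relation.ReflTransGen.single (grArc_s_off hst hP hvoff hadj),
        Relation.ReflTransGen.single (grArc_off_to hP hvoff hadj.symm hst s_not_offPath)⟩
    · have hcomp : βv = β₀ := by
        rw [hβv, ← hβ₀comp]
        exact SimpleGraph.ConnectedComponent.sound
          (SimpleGraph.Adj.reachable (by exact hadj.symm :
            (G.induce (offPath G s t P)).Adj ⟨v, hvoff⟩ ⟨u, hβ₀off⟩))
      rw [hcomp]
      exact hβ₀S
    · obtain ⟨hlt, hb1⟩ := hstrict j hju hle
      obtain ⟨hwint, ⟨β₀, hβ₀S, hβ₀arc⟩, _⟩ := hw1 j hb1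
      constructor
      · refine ((hβ₀S.1.tail hβ₀arc).trans ?_).tail (grArc_internal_to_off hP hju hvoff hadj)
        have hdesc := grReach_vin_to_vout hP hint hju hwint hlt
        rwa [toGR_inl_not_off (not_offPath_of_mem_support hwint.1),
          toGR_inr_not_off (not_offPath_of_mem_support hju.1)] at hdesc
      · refine Relation.ReflTransGen.head
          (grArc_off_to hP hvoff hadj.symm hju.2.2 (not_offPath_of_mem_support hju.1)) ?_
        have hdesc := grReach_vin_to_s hP hint hju
        rwa [toGR_inl_not_off (not_offPath_of_mem_support hju.1)] at hdesc
  · -- Case B : `v` is on a path or an endpoint.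
    by_cases hvs : v = s
    · exact Or.inl hvs
    by_cases hvt : v = t
    · -- `v = t` is impossible.
      exfalso
      rw [hvt] at hadj
      rcases hu with rfl | ⟨β₀, hβ₀S, hβ₀off, hβ₀comp⟩ | ⟨j, hju, hle⟩
      · exact not_adj_s_t hP hint hE hadj
      · apply hnsc
        refine ⟨?_, resReach_t_to_s (G := G) (P := P) ⟨0, hr⟩⟩
        have h1 : Relation.ReflTransGen (ResArc G s t P) (Sum.inl s) (Sum.inl u) := by
          refine resReach_of_grReach hβ₀S.1 (Sum.inl s) (Sum.inl u)
            ⟨Sum.inl s, rfl⟩ ⟨Sum.inl u, rfl⟩ (toGR_inl_not_off s_not_offPath) ?_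
          rw [toGR_inl_off hβ₀off, hβ₀comp]
        exact h1.tail (resArc_off_to hβ₀off hadj)
      · obtain ⟨hlt, _⟩ := hstrict j hju hle
        have hnd := (hP.1 j).support_nodup
        obtain ⟨j'', hedge⟩ := hE u t hadj (Or.inr (Or.inr ⟨j, hju.1⟩)) (Or.inr (Or.inl rfl))
        have hj'' : j'' = j := support_unique hP ((P j'').fst_mem_support_of_mem_edges hedge)
          hju.1 hju.2.1 hju.2.2
        rw [hj''] at hedge
        have hwint : Internal (P j) (w j) := internal_w hw1 hw2 j
        rcases traversed_or_of_mem_edges hedge with htr | htr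
        · have h1 := htr.indexOf hnd
          have h2 : (P j).support.idxOf t = (P j).support.length - 1 := indexOf_end hnd
          have h3 : (P j).support.idxOf (w j) < (P j).support.length :=
            List.idxOf_lt_length_iff.2 hwint.1
          have h4 : (P j).support.idxOf (w j) ≠ (P j).support.length - 1 := by
            intro hh
            rw [← h2] at hh
            exact hwint.2.2 (eq_of_indexOf_eq hwint.1 (P j).end_mem_support hh)
          omega
        · exact htr.fst_ne_end hnd rfl
    -- now `v` is internal to some path
    have hvj' : ∃ j', v ∈ (P j').support := by
      by_contra hc
      push_neg at hc
      exact hvoff ⟨hvs, hvt, hc⟩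
    obtain ⟨j', hvj'⟩ := hvj'
    have hvint : Internal (P j') v := ⟨hvj', hvs, hvt⟩
    rcases hu with rfl | ⟨β₀, hβ₀S, hβ₀off, hβ₀comp⟩ | ⟨j, hju, hle⟩
    · -- `u = s` : `v` is the second vertex of some path.
      obtain ⟨j'', hedge⟩ := hE u v hadj (Or.inl rfl) (Or.inr (Or.inr ⟨j', hvj'⟩))
      obtain ⟨htr, hidx⟩ := edge_from_s hP hint hedge
      have hvint'' : Internal (P j'') v := second_vertex_internal hP hint htr
      have hw'' : Internal (P j'') (w j'') := internal_w hw1 hw2 j''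
      have hwne : (P j'').support.idxOf (w j'') ≠ 0 := fun hh =>
        hw''.2.1 (eq_start_of_indexOf_eq_zero hw''.1 hh)
      exact Or.inr (Or.inr ⟨j'', hvint'', by omega⟩)
    · -- `u` in a bridge mutually reachable with `s`.
      have harc : GRArc G s t P (Sum.inr β₀) (Sum.inl (Sum.inl v)) := by
        have := grArc_off_to hP hβ₀off hadj hvt hvoff
        rwa [hβ₀comp] at this
      have hb1 : ∃ β : Bridge G s t P, BridgeWithS G s t P β ∧
          ∃ z, Internal (P j') z ∧ GRArc G s t P (Sum.inr β) (Sum.inl (Sum.inl z)) :=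
        ⟨β₀, hβ₀S, v, hvint, harc⟩
      obtain ⟨hwint, _, hmax⟩ := hw1 j' hb1
      have hle := hmax β₀ v hβ₀S hvint harc
      rw [posOn_internal hvint, posOn_internal hwint] at hle
      exact Or.inr (Or.inr ⟨j', hvint, by omega⟩)
    · -- `u` internal, strictly left of `w j`.
      obtain ⟨hlt, _⟩ := hstrict j hju hle
      have hnd := (hP.1 j).support_nodup
      obtain ⟨j'', hedge⟩ := hE u v hadj (Or.inr (Or.inr ⟨j, hju.1⟩))
        (Or.inr (Or.inr ⟨j', hvj'⟩))
      have hj'' : j'' = j := support_unique hP ((P j'').fst_mem_support_of_mem_edges hedge)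
        hju.1 hju.2.1 hju.2.2
      rw [hj''] at hedge
      have hvintj : Internal (P j) v := ⟨(P j).snd_mem_support_of_mem_edges hedge, hvs, hvt⟩
      rcases traversed_or_of_mem_edges hedge with htr | htr
      · have h1 := htr.indexOf hnd
        exact Or.inr (Or.inr ⟨j, hvintj, by omega⟩)
      · have h1 := htr.indexOf hnd
        exact Or.inr (Or.inr ⟨j, hvintj, by omega⟩)

end Closure


section Main

set_option linter.unusedSectionVars false

variable {G} {s t} {P} {w : Fin r → V}

lemma t_not_in_L (hst : s ≠ t) : t ∉ Lset G s t P w := by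
  rintro (h | ⟨β, _, hoff, _⟩ | ⟨j, hji, _⟩)
  · exact hst h.symm
  · exact t_not_offPath hoff
  · exact hji.2.2 rfl

lemma walk_hits (hst : s ≠ t) (hr : 1 ≤ r) (hP : PathSystem P)
    (hE : ∀ u v : V, G.Adj u v →
      (u = s ∨ u = t ∨ ∃ j, u ∈ (P j).support) →
      (v = s ∨ v = t ∨ ∃ j, v ∈ (P j).support) →
      ∃ j, s(u, v) ∈ (P j).edges)
    (hint : ∀ j : Fin r, ∃ v, Internal (P j) v)
    (hnsc : ¬ (Relation.ReflTransGen (ResArc G s t P) (Sum.inl s) (Sum.inl t) ∧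
               Relation.ReflTransGen (ResArc G s t P) (Sum.inl t) (Sum.inl s)))
    (hw1 : ∀ j : Fin r,
      (∃ β : Bridge G s t P, BridgeWithS G s t P β ∧
          ∃ u, Internal (P j) u ∧ GRArc G s t P (Sum.inr β) (Sum.inl (Sum.inl u))) →
        Internal (P j) (w j) ∧
        (∃ β : Bridge G s t P, BridgeWithS G s t P β ∧
          GRArc G s t P (Sum.inr β) (Sum.inl (Sum.inl (w j)))) ∧
        ∀ (β : Bridge G s t P) (u : V), BridgeWithS G s t P β → Internal (P j) u →
          GRArc G s t P (Sum.inr β) (Sum.inl (Sum.inl u)) →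
            posOn G s t P j (Sum.inl u) ≤ posOn G s t P j (Sum.inl (w j)))
    (hw2 : ∀ j : Fin r,
      (¬ ∃ β : Bridge G s t P, BridgeWithS G s t P β ∧
          ∃ u, Internal (P j) u ∧ GRArc G s t P (Sum.inr β) (Sum.inl (Sum.inl u))) →
        Internal (P j) (w j) ∧ G.Adj s (w j)) :
    ∀ {a c : V} (Q : G.Walk a c), a ∈ Lset G s t P w → c ∉ Lset G s t P w →
      ∃ j, w j ∈ Q.support := by
  intro a c Q
  induction Q with
  | nil => intro ha hc; exact absurd ha hc
  | @cons a b c h q ih =>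
    intro ha hc
    by_cases hex : ∃ j, a = w j
    · obtain ⟨j, hj⟩ := hex
      exact ⟨j, by rw [← hj]; exact (SimpleGraph.Walk.cons h q).start_mem_support⟩
    · push_neg at hex
      have hb : b ∈ Lset G s t P w :=
        closure_L hst hr hP hE hint hnsc hw1 hw2 ha hex h
      obtain ⟨j, hj⟩ := ih hb hc
      exact ⟨j, by rw [SimpleGraph.Walk.support_cons]; exact List.mem_cons_of_mem _ hj⟩

end Main

/-- Assume each `P_j` has an internal vertex and that `s` and `t` are not
mutually reachable in `G_res`. Let `ℬ` be the bridges mutually reachable with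
`s` in `G_R`. For each `j`, let `w_j` be the internal vertex `v` of `P_j` such
that `v_in` is the rightmost out-neighbor on `P_j` of a bridge of `ℬ` (if such
an out-neighbor exists), and the internal vertex of `P_j` adjacent to `s`
otherwise. Then `{w_1, …, w_r}` is an `s`–`t` vertex cut of `G`: every `s`–`t`
path of `G` contains some `w_j`. In particular `G` has an `s`–`t` vertex cut of
size at most `r`. -/
theorem cut_of_no_augmenting_path
    {V : Type*} [Fintype V] [DecidableEq V]
    (G : SimpleGraph V) (s t : V) (hst : s ≠ t)
    {r : ℕ} (hr : 1 ≤ r) (P : Fin r → G.Walk s t) (hP : PathSystem P)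
    (hE : ∀ u v : V, G.Adj u v →
      (u = s ∨ u = t ∨ ∃ j, u ∈ (P j).support) →
      (v = s ∨ v = t ∨ ∃ j, v ∈ (P j).support) →
      ∃ j, s(u, v) ∈ (P j).edges)
    (hint : ∀ j : Fin r, ∃ v, Internal (P j) v)
    (hnsc : ¬ (Relation.ReflTransGen (ResArc G s t P) (Sum.inl s) (Sum.inl t) ∧
               Relation.ReflTransGen (ResArc G s t P) (Sum.inl t) (Sum.inl s)))
    (w : Fin r → V)
    (hw : ∀ j : Fin r,
      ((∃ β : Bridge G s t P, BridgeWithS G s t P β ∧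
          ∃ u, Internal (P j) u ∧
            GRArc G s t P (Sum.inr β) (Sum.inl (Sum.inl u))) →
        Internal (P j) (w j) ∧
        (∃ β : Bridge G s t P, BridgeWithS G s t P β ∧
          GRArc G s t P (Sum.inr β) (Sum.inl (Sum.inl (w j)))) ∧
        ∀ (β : Bridge G s t P) (u : V), BridgeWithS G s t P β → Internal (P j) u →
          GRArc G s t P (Sum.inr β) (Sum.inl (Sum.inl u)) →
            posOn G s t P j (Sum.inl u) ≤ posOn G s t P j (Sum.inl (w j))) ∧
      ((¬ ∃ β : Bridge G s t P, BridgeWithS G s t P β ∧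
          ∃ u, Internal (P j) u ∧
            GRArc G s t P (Sum.inr β) (Sum.inl (Sum.inl u))) →
        Internal (P j) (w j) ∧ G.Adj s (w j))) :
    (∀ Q : G.Walk s t, Q.IsPath → ∃ j : Fin r, w j ∈ Q.support) ∧
    ∃ S : Finset V, S.card ≤ r ∧ s ∉ S ∧ t ∉ S ∧
      ∀ Q : G.Walk s t, Q.IsPath → ∃ v ∈ S, v ∈ Q.support := by
  have hw1 := fun j => (hw j).1
  have hw2 := fun j => (hw j).2
  have part1 : ∀ Q : G.Walk s t, Q.IsPath → ∃ j : Fin r, w j ∈ Q.support := fun Q _ =>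
    walk_hits hst hr hP hE hint hnsc hw1 hw2 Q (Or.inl rfl) (t_not_in_L hst)
  refine ⟨part1, Finset.univ.image w, ?_, ?_, ?_, ?_⟩
  · exact Finset.card_image_le.trans (by simp)
  · intro hs
    obtain ⟨j, _, hj⟩ := Finset.mem_image.1 hs
    exact (internal_w hw1 hw2 j).2.1 hj
  · intro ht
    obtain ⟨j, _, hj⟩ := Finset.mem_image.1 ht
    exact (internal_w hw1 hw2 j).2.2 hj
  · intro Q hQ
    obtain ⟨j, hj⟩ := part1 Q hQ
    exact ⟨w j, Finset.mem_image_of_mem w (Finset.mem_univ j), hj⟩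

end PaperTW
end
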